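/- Let λ > 0, κ ≥ 0, ε ∈ (0,1) and T > 0, and let r : [0,T] → (0,1) be differentiable with r'(t) = r(t)·(1 − r(t))·λ/(1 + κ·r(t)) for all t ∈ [0,T] and r(0) = r_0 ∈ (0,1). If r(t) ≤ ε for all t ∈ [0,T], then r_0·e^{c t} ≤ r(t) ≤ r_0·e^{λ t} for all t ∈ [0,T], where c = (1 − ε)·λ/(1 + κ·ε). -/

import Mathlib

/-- Let `λ > 0`, `κ ≥ 0`, `ε ∈ (0,1)`, `T > 0`, and let
`r : [0,T] → (0,1)` solve `r' = r(1 − r)λ/(1 + κ r)` with `r(0) = r₀ ∈ (0,1)`.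
If `r(t) ≤ ε` on `[0,T]`, then `r₀ e^{c t} ≤ r(t) ≤ r₀ e^{λ t}` on `[0,T]`, where
`c = (1 − ε)λ/(1 + κ ε)`. -/
theorem selection_ode_exponential_bounds (lam κ ε T : ℝ) (hlam : 0 < lam) (hκ : 0 ≤ κ)
    (hε : ε ∈ Set.Ioo (0 : ℝ) 1) (hT : 0 < T) (r : ℝ → ℝ) (r₀ : ℝ)
    (hr₀mem : r₀ ∈ Set.Ioo (0 : ℝ) 1) (hr0 : r 0 = r₀)
    (hmem : ∀ t ∈ Set.Icc (0 : ℝ) T, r t ∈ Set.Ioo (0 : ℝ) 1)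
    (hderiv : ∀ t ∈ Set.Icc (0 : ℝ) T,
      HasDerivAt r (r t * (1 - r t) * lam / (1 + κ * r t)) t)
    (hsmall : ∀ t ∈ Set.Icc (0 : ℝ) T, r t ≤ ε) :
    ∀ t ∈ Set.Icc (0 : ℝ) T,
      r₀ * Real.exp ((1 - ε) * lam / (1 + κ * ε) * t) ≤ r t ∧
      r t ≤ r₀ * Real.exp (lam * t) := by
  set c : ℝ := (1 - ε) * lam / (1 + κ * ε) with hc
  have hεκ : 0 < 1 + κ * ε := by nlinarith [hε.1, hε.2]
  have hint : interior (Set.Icc (0:ℝ) T) = Set.Ioo 0 T := interior_Icc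
  have hrc : ContinuousOn r (Set.Icc 0 T) := fun t ht =>
    (hderiv t ht).continuousAt.continuousWithinAt
  -- helper: derivative of r t * exp(a * t)
  have key : ∀ a : ℝ, ∀ t ∈ Set.Icc (0:ℝ) T,
      HasDerivAt (fun s => r s * Real.exp (a * s))
        ((r t * (1 - r t) * lam / (1 + κ * r t) + a * r t) * Real.exp (a * t)) t := by
    intro a t ht
    have he : HasDerivAt (fun s => Real.exp (a * s)) (Real.exp (a * t) * a) t := by
      simpa using ((hasDerivAt_id t).const_mul a).exp
    have : HasDerivAt (fun s => r s * Real.exp (a * s)) _ t := (hderiv t ht).mul he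
    convert this using 1
    ring
  -- upper bound: f t = r t * exp (-lam * t) is antitone
  have hupper : AntitoneOn (fun s => r s * Real.exp (-lam * s)) (Set.Icc 0 T) := by
    apply antitoneOn_of_deriv_nonpos (convex_Icc 0 T)
    · exact hrc.mul (Real.continuous_exp.comp (continuous_const.mul continuous_id)).continuousOn
    · rw [hint]
      intro t ht
      exact ((key (-lam) t (Set.Ioo_subset_Icc_self ht)).differentiableAt).differentiableWithinAt
    · rw [hint]
      intro t ht
      have ht' := Set.Ioo_subset_Icc_self ht
      rw [(key (-lam) t ht').deriv]
      have hm := hmem t ht'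
      have hden : 0 < 1 + κ * r t := by nlinarith [hm.1, hm.2]
      have h1 : r t * (1 - r t) * lam / (1 + κ * r t) ≤ lam * r t := by
        rw [div_le_iff₀ hden]; nlinarith [mul_nonneg (mul_nonneg hlam.le hm.1.le) (mul_nonneg hκ hm.1.le), mul_nonneg (mul_nonneg hlam.le hm.1.le) hm.1.le]
      have : r t * (1 - r t) * lam / (1 + κ * r t) + (-lam) * r t ≤ 0 := by linarith
      exact mul_nonpos_of_nonpos_of_nonneg this (Real.exp_nonneg _)
  -- lower bound: g t = r t * exp (-c * t) is monotone
  have hlower : MonotoneOn (fun s => r s * Real.exp (-c * s)) (Set.Icc 0 T) := by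
    apply monotoneOn_of_deriv_nonneg (convex_Icc 0 T)
    · exact hrc.mul (Real.continuous_exp.comp (continuous_const.mul continuous_id)).continuousOn
    · rw [hint]
      intro t ht
      exact ((key (-c) t (Set.Ioo_subset_Icc_self ht)).differentiableAt).differentiableWithinAt
    · rw [hint]
      intro t ht
      have ht' := Set.Ioo_subset_Icc_self ht
      rw [(key (-c) t ht').deriv]
      have hm := hmem t ht'
      have hs := hsmall t ht'
      have hden : 0 < 1 + κ * r t := by nlinarith [hm.1, hm.2]
      have h1 : c * r t ≤ r t * (1 - r t) * lam / (1 + κ * r t) := by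
        rw [hc, le_div_iff₀ hden, div_mul_eq_mul_div, div_mul_eq_mul_div, div_le_iff₀ hεκ]
        nlinarith [mul_nonneg (mul_nonneg hlam.le hm.1.le) (mul_nonneg (by linarith : (0:ℝ) ≤ ε - r t) (by linarith : (0:ℝ) ≤ 1 + κ))]
      have : 0 ≤ r t * (1 - r t) * lam / (1 + κ * r t) + (-c) * r t := by linarith
      exact mul_nonneg this (Real.exp_nonneg _)
  intro t ht
  have h0 : (0:ℝ) ∈ Set.Icc (0:ℝ) T := ⟨le_refl 0, hT.le⟩
  constructor
  · have := hlower h0 ht ht.1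
    simp only [mul_zero, Real.exp_zero, mul_one, hr0] at this
    have h2 : r₀ ≤ r t * Real.exp (-c * t) := this
    calc r₀ * Real.exp (c * t) ≤ (r t * Real.exp (-c * t)) * Real.exp (c * t) := by
          exact mul_le_mul_of_nonneg_right h2 (Real.exp_nonneg _)
      _ = r t := by rw [mul_assoc, ← Real.exp_add]; ring_nf; simp
  · have := hupper h0 ht ht.1
    simp only [mul_zero, Real.exp_zero, mul_one, hr0] at this
    have h2 : r t * Real.exp (-lam * t) ≤ r₀ := this
    calc r t = (r t * Real.exp (-lam * t)) * Real.exp (lam * t) := by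
          rw [mul_assoc, ← Real.exp_add]; ring_nf; simp
      _ ≤ r₀ * Real.exp (lam * t) := mul_le_mul_of_nonneg_right h2 (Real.exp_nonneg _)
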